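/- Core telescoping inequality for Hedge with second-order terms: Let K ≥ 1, T ≥ 1, ε ∈ (0,1/2), and set α = ln(1/(1−ε)) and β = α². Let c_1,...,c_T be arbitrary cost vectors with c_t(a) ≥ 0 for all arms a ∈ [K]. Define weights w_1(a) = 1 and w_{t+1}(a) = w_t(a)·(1−ε)^{c_t(a)}, W_t = Σ_{a∈[K]} w_t(a), distributions p_t(a) = w_t(a)/W_t, and the quantities F_t = Σ_{a∈[K]} p_t(a)·c_t(a) and G_t = Σ_{a∈[K]} p_t(a)·c_t(a)². Then Σ_{t=1}^T (α·F_t − β·G_t) ≤ ln K − ln(1−ε)·cost*, where cost* = min_{a∈[K]} Σ_{t=1}^T c_t(a). -/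

import Mathlib

private lemma exp_neg_le_quad (y : ℝ) (hy : 0 ≤ y) :
    Real.exp (-y) ≤ 1 - y + y ^ 2 := by
  have h1 : (1:ℝ) + y ≤ Real.exp y := by linarith [Real.add_one_le_exp y]
  have h2 : (0:ℝ) < 1 + y := by linarith
  have h3 : Real.exp (-y) = 1 / Real.exp y := by
    rw [Real.exp_neg]; ring
  rw [h3]
  have h4 : 1 / Real.exp y ≤ 1 / (1 + y) :=
    one_div_le_one_div_of_le h2 h1
  refine h4.trans ?_
  rw [div_le_iff₀ h2]
  nlinarith [sq_nonneg y]

/-- **Core telescoping inequality for Hedge with second-order terms.**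
With `α = ln(1/(1-ε))` and `β = α²`, nonnegative costs `c t a`, Hedge weights
`w 0 a = 1`, `w (t+1) a = w t a · (1-ε)^(c t a)`, distributions
`p t a = w t a / ∑ a', w t a'`, and per-round quantities
`F_t = ∑_a p t a · c t a` and `G_t = ∑_a p t a · (c t a)²`, we have
`∑_t (α F_t − β G_t) ≤ ln K − ln(1−ε) · cost*` where `cost* = min_a ∑_t c t a`. -/
theorem hedge_telescoping_inequality (K T : ℕ) (hK : 1 ≤ K) (hT : 1 ≤ T)
    (ε : ℝ) (hε0 : 0 < ε) (hε1 : ε < 1 / 2)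
    (α β : ℝ) (hα : α = Real.log (1 / (1 - ε))) (hβ : β = α ^ 2)
    (c : Fin T → Fin K → ℝ) (hc : ∀ t a, 0 ≤ c t a)
    (w : ℕ → Fin K → ℝ)
    (hw0 : ∀ a, w 0 a = 1)
    (hw : ∀ (t : Fin T) (a : Fin K), w (t.1 + 1) a = w t.1 a * (1 - ε) ^ (c t a))
    (p : Fin T → Fin K → ℝ)
    (hp : ∀ (t : Fin T) (a : Fin K), p t a = w t.1 a / ∑ a', w t.1 a') :
    (∑ t : Fin T,
        (α * (∑ a : Fin K, p t a * c t a) - β * ∑ a : Fin K, p t a * (c t a) ^ 2))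
      ≤ Real.log K - Real.log (1 - ε) *
          (Finset.univ.inf' ⟨⟨0, by omega⟩, Finset.mem_univ _⟩
            (fun a : Fin K => ∑ t : Fin T, c t a)) := by
  have hεpos : (0:ℝ) < 1 - ε := by linarith
  haveI : Nonempty (Fin K) := ⟨⟨0, by omega⟩⟩
  have hα' : α = -Real.log (1 - ε) := by
    rw [hα, one_div, Real.log_inv]
  have hαnn : 0 ≤ α := by
    rw [hα']
    have : Real.log (1 - ε) ≤ 0 := Real.log_nonpos (by linarith) (by linarith)
    linarith
  set W : ℕ → ℝ := fun t => ∑ a, w t a with hWdef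
  -- positivity of weights
  have hwpos : ∀ t, t ≤ T → ∀ a, 0 < w t a := by
    intro t
    induction t with
    | zero => intro _ a; rw [hw0]; norm_num
    | succ n ih =>
      intro hn a
      have hnT : n < T := by omega
      rw [hw ⟨n, hnT⟩ a]
      exact mul_pos (ih (by omega) a) (Real.rpow_pos_of_pos hεpos _)
  have hWpos : ∀ t, t ≤ T → 0 < W t := by
    intro t ht
    exact Finset.sum_pos (fun a _ => hwpos t ht a) Finset.univ_nonempty
  -- per-round inequality
  have key : ∀ t : Fin T,
      α * (∑ a, p t a * c t a) - β * ∑ a, p t a * (c t a) ^ 2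
        ≤ Real.log (W t.1) - Real.log (W (t.1 + 1)) := by
    intro t
    have hWt : 0 < W t.1 := hWpos t.1 t.2.le
    have hppos : ∀ a, 0 < p t a := by
      intro a; rw [hp]; exact div_pos (hwpos t.1 t.2.le a) hWt
    have hsum1 : ∑ a, p t a = 1 := by
      have : ∑ a, p t a = (∑ a, w t.1 a) / W t.1 := by
        rw [Finset.sum_div]
        exact Finset.sum_congr rfl (fun a _ => hp t a)
      rw [this, div_self (ne_of_gt hWt)]
    set S : ℝ := ∑ a, p t a * (1 - ε) ^ (c t a) with hSdef
    have hSpos : 0 < S :=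
      Finset.sum_pos (fun a _ => mul_pos (hppos a) (Real.rpow_pos_of_pos hεpos _))
        Finset.univ_nonempty
    have hWrec : W (t.1 + 1) = W t.1 * S := by
      rw [hSdef, Finset.mul_sum]
      refine Finset.sum_congr rfl (fun a _ => ?_)
      rw [hw t a, hp]
      field_simp
      exact (mul_div_cancel_right₀ _ (ne_of_gt hWt)).symm
    have hpoint : ∀ a : Fin K,
        (1 - ε) ^ (c t a) ≤ 1 - α * c t a + β * (c t a) ^ 2 := by
      intro a
      have h1 : (1 - ε) ^ (c t a) = Real.exp (-(α * c t a)) := by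
        rw [Real.rpow_def_of_pos hεpos, hα']
        ring_nf
      rw [h1]
      have h2 := exp_neg_le_quad (α * c t a) (mul_nonneg hαnn (hc t a))
      calc Real.exp (-(α * c t a)) ≤ 1 - α * c t a + (α * c t a) ^ 2 := h2
        _ = 1 - α * c t a + β * (c t a) ^ 2 := by rw [hβ]; ring
    have hSle : S ≤ 1 - α * (∑ a, p t a * c t a) + β * ∑ a, p t a * (c t a) ^ 2 := by
      have : S ≤ ∑ a, p t a * (1 - α * c t a + β * (c t a) ^ 2) := by
        refine Finset.sum_le_sum (fun a _ => ?_)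
        exact mul_le_mul_of_nonneg_left (hpoint a) (hppos a).le
      refine this.trans_eq ?_
      have expand : ∀ a : Fin K, p t a * (1 - α * c t a + β * (c t a) ^ 2)
          = p t a - α * (p t a * c t a) + β * (p t a * (c t a) ^ 2) := fun a => by ring
      rw [Finset.sum_congr rfl (fun a _ => expand a), Finset.sum_add_distrib,
        Finset.sum_sub_distrib, ← Finset.mul_sum, ← Finset.mul_sum, hsum1]
    have hlogS : Real.log S ≤ -(α * (∑ a, p t a * c t a) - β * ∑ a, p t a * (c t a) ^ 2) := by
      have := Real.log_le_sub_one_of_pos hSpos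
      linarith
    have hlogW : Real.log (W (t.1 + 1)) = Real.log (W t.1) + Real.log S := by
      rw [hWrec, Real.log_mul (ne_of_gt hWt) (ne_of_gt hSpos)]
    linarith
  -- telescope
  have htel : ∑ t : Fin T, (Real.log (W t.1) - Real.log (W (t.1 + 1)))
      = Real.log (W 0) - Real.log (W T) := by
    rw [Fin.sum_univ_eq_sum_range (fun i => Real.log (W i) - Real.log (W (i + 1))) T]
    exact Finset.sum_range_sub' (fun i => Real.log (W i)) T
  have hsum_le : (∑ t : Fin T,
      (α * (∑ a : Fin K, p t a * c t a) - β * ∑ a : Fin K, p t a * (c t a) ^ 2))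
      ≤ Real.log (W 0) - Real.log (W T) := by
    rw [← htel]
    exact Finset.sum_le_sum (fun t _ => key t)
  have hW0 : W 0 = K := by
    simp [hWdef, hw0]
  -- min arm
  obtain ⟨astar, -, hastar⟩ := Finset.exists_mem_eq_inf'
    ⟨⟨0, by omega⟩, Finset.mem_univ _⟩ (fun a : Fin K => ∑ t : Fin T, c t a)
  have hlogwT : Real.log (w T astar) = (∑ t : Fin T, c t astar) * Real.log (1 - ε) := by
    have h1 : ∀ t : Fin T,
        Real.log (w (t.1 + 1) astar) - Real.log (w t.1 astar)
          = c t astar * Real.log (1 - ε) := by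
      intro t
      rw [hw t astar,
        Real.log_mul (ne_of_gt (hwpos t.1 t.2.le astar))
          (ne_of_gt (Real.rpow_pos_of_pos hεpos _)),
        Real.log_rpow hεpos]
      ring
    have h2 : ∑ t : Fin T, (Real.log (w (t.1 + 1) astar) - Real.log (w t.1 astar))
        = Real.log (w T astar) - Real.log (w 0 astar) := by
      rw [Fin.sum_univ_eq_sum_range
        (fun i => Real.log (w (i + 1) astar) - Real.log (w i astar)) T]
      exact Finset.sum_range_sub (fun i => Real.log (w i astar)) T
    rw [hw0, Real.log_one, sub_zero] at h2
    rw [← h2, Finset.sum_congr rfl (fun t _ => h1 t), ← Finset.sum_mul]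
  have hWTge : Real.log (1 - ε) * (∑ t : Fin T, c t astar) ≤ Real.log (W T) := by
    have hle : w T astar ≤ W T :=
      Finset.single_le_sum (fun a _ => (hwpos T le_rfl a).le) (Finset.mem_univ astar)
    have := Real.log_le_log (hwpos T le_rfl astar) hle
    rw [hlogwT] at this
    linarith [this]
  rw [hastar]
  calc (∑ t : Fin T,
        (α * (∑ a : Fin K, p t a * c t a) - β * ∑ a : Fin K, p t a * (c t a) ^ 2))
      ≤ Real.log (W 0) - Real.log (W T) := hsum_le
    _ ≤ Real.log K - Real.log (1 - ε) * (∑ t : Fin T, c t astar) := by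
        rw [hW0]; linarith
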